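/- Let X = {a,b}, and let h : X* → X* be the morphism with h(a) = a^s and h(b) = a^{γ_1} b a^{α_1} b a^{α_2} b ⋯ b a^{α_{p-1}} b a^{γ_2}, where s ≥ 1, p ≥ 2 and γ_1, γ_2, α_1, …, α_{p-1} ≥ 0. Let w = ω(h) and for i ≥ 1 let A_w(i) denote the number of a's in w between the i-th and (i+1)-th occurrences of b. Then for every i ∈ {1,…,p-1} and every n ≥ 0, A_w(i + p·n) = α_i. -/

import Mathlib

/-- Words over the binary alphabet: `false` is the letter `a`, `true` is the letter `b`. -/
abbrev Word := List Bool

/-- The morphism of the free monoid determined by the images `g` of the letters. -/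
def applyG (g : Bool → Word) (w : Word) : Word := w.flatMap g

/-- `a^n`. -/
def rep (n : ℕ) : Word := List.replicate n false

/-- `b a^{α 1} b a^{α 2} ⋯ b a^{α (p-1)} b`, a word with `p` occurrences of `b`. -/
def blockWord (p : ℕ) (α : ℕ → ℕ) : Word :=
  ((List.range (p - 1)).flatMap fun i => true :: rep (α (i + 1))) ++ [true]

/-- `w^k`. -/
def wordPow (w : Word) (k : ℕ) : Word := (List.replicate k w).flatten

/-- `u` and `v` are `a`-conjugates. -/
def AConj (u v : Word) : Prop :=
  ∃ p q r s : ℕ, ∃ w : Word,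
    u = rep p ++ w ++ rep q ∧ v = rep r ++ w ++ rep s ∧ p + q = r + s

/-- `w` is the infinite word `ω(g)`: for every `n`, the word obtained from `g^n(b)` by deleting
all occurrences of `a` preceding the first occurrence of `b` is a prefix of `w`. -/
def IsOmega (g : Bool → Word) (w : ℕ → Bool) : Prop :=
  ∀ n k : ℕ, ∀ hk : k < (((applyG g)^[n] [true]).dropWhile (fun x => !x)).length,
    (((applyG g)^[n] [true]).dropWhile (fun x => !x)).get ⟨k, hk⟩ = w k

/-- `Aw w i` (for `i ≥ 1`): the number of occurrences of `a` in `w` strictly between the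
`i`-th and `(i+1)`-th occurrences of `b` in `w`. -/
noncomputable def Aw (w : ℕ → Bool) (i : ℕ) : ℕ :=
  Nat.nth (fun n => w n = true) i - Nat.nth (fun n => w n = true) (i - 1) - 1

namespace Stmt6Aux

/-- A chunk `b a^d`. -/
def chunk (d : ℕ) : Word := true :: rep d

/-- Concatenation of chunks. -/
def trueChunks (M : List ℕ) : Word := M.flatMap chunk

lemma trueChunks_nil : trueChunks [] = [] := rfl

lemma trueChunks_cons (d : ℕ) (M : List ℕ) :
    trueChunks (d :: M) = chunk d ++ trueChunks M := List.flatMap_cons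

lemma trueChunks_append (L L' : List ℕ) :
    trueChunks (L ++ L') = trueChunks L ++ trueChunks L' := List.flatMap_append

lemma count_trueChunks (M : List ℕ) : (trueChunks M).count true = M.length := by
  induction M with
  | nil => rfl
  | cons d M ih =>
      rw [trueChunks_cons, List.count_append, ih, chunk]
      simp [rep, List.count_replicate, List.count_cons]
      omega

/-- Position of the `(k+1)`-th `b` in `trueChunks M`. -/
def S (M : List ℕ) (k : ℕ) : ℕ := (trueChunks (M.take k)).length

lemma trueChunks_take_drop (M : List ℕ) (k : ℕ) :
    trueChunks M = trueChunks (M.take k) ++ trueChunks (M.drop k) := by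
  rw [← trueChunks_append, List.take_append_drop]

lemma take_S (M : List ℕ) (k : ℕ) :
    (trueChunks M).take (S M k) = trueChunks (M.take k) := by
  conv_lhs => rw [trueChunks_take_drop M k]
  rw [S, List.take_left]

lemma S_succ (M : List ℕ) (k : ℕ) (hk : k < M.length) :
    S M (k + 1) = S M k + (M[k] + 1) := by
  have ht : M.take (k + 1) = M.take k ++ [M[k]] := by
    rw [List.take_succ, List.getElem?_eq_getElem hk]
    rfl
  rw [S, S, ht, trueChunks_append, List.length_append, trueChunks_cons]
  simp [chunk, rep, trueChunks_nil]

lemma S_lt (M : List ℕ) (k : ℕ) (hk : k < M.length) :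
    S M k < (trueChunks M).length := by
  rw [trueChunks_take_drop M k, List.length_append, S]
  have hd : M.drop k = M[k] :: M.drop (k + 1) := List.drop_eq_getElem_cons hk
  rw [hd, trueChunks_cons]
  simp [chunk]

lemma getElem_S (M : List ℕ) (k : ℕ) (hk : k < M.length)
    (hx : S M k < (trueChunks M).length) : (trueChunks M)[S M k] = true := by
  have heq : trueChunks M = trueChunks (M.take k) ++ trueChunks (M.drop k) :=
    trueChunks_take_drop M k
  rw [List.getElem_of_eq heq hx]
  have hd : M.drop k = M[k] :: M.drop (k + 1) := List.drop_eq_getElem_cons hk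
  have hS : S M k = (trueChunks (M.take k)).length := rfl
  rw [List.getElem_append_right (by omega)]
  have h0 : S M k - (trueChunks (M.take k)).length = 0 := by omega
  simp only [h0, hd, trueChunks_cons, chunk]
  rfl


section
variable (s p γ₁ γ₂ : ℕ) (α : ℕ → ℕ) (h : Bool → Word)

/-- The inner gap list. -/
def baseL : List ℕ := (List.range (p - 1)).map fun i => α (i + 1)

/-- The gap-list expansion map corresponding to `h`. -/
def E (d : ℕ) : List ℕ := baseL p α ++ [γ₂ + s * d + γ₁]

lemma length_E (hp : 2 ≤ p) (d : ℕ) : (E s p γ₁ γ₂ α d).length = p := by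
  simp [E, baseL]; omega

lemma trueChunks_singleton (x : ℕ) : trueChunks [x] = true :: rep x := by
  show chunk x ++ trueChunks [] = _
  simp [chunk, trueChunks]

lemma blockWord_eq (x : ℕ) :
    blockWord p α ++ rep x = trueChunks (baseL p α ++ [x]) := by
  rw [trueChunks_append, blockWord, baseL, trueChunks, List.flatMap_map,
    trueChunks_singleton]
  simp [chunk, Function.comp]

lemma tc_absorb (L : List ℕ) (x y : ℕ) :
    trueChunks (L ++ [x]) ++ rep y = trueChunks (L ++ [x + y]) := by
  rw [trueChunks_append, trueChunks_append, trueChunks_singleton,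
    trueChunks_singleton, rep, rep, rep, List.replicate_add]
  simp

lemma applyG_cons (g : Bool → Word) (a : Bool) (l : Word) :
    applyG g (a :: l) = g a ++ applyG g l := List.flatMap_cons

lemma applyG_append (g : Bool → Word) (l₁ l₂ : Word) :
    applyG g (l₁ ++ l₂) = applyG g l₁ ++ applyG g l₂ := List.flatMap_append

lemma applyG_rep (ha : h false = rep s) (n : ℕ) : applyG h (rep n) = rep (s * n) := by
  induction n with
  | zero => simp [applyG, rep]
  | succ n ih =>
      have hr : rep (n + 1) = false :: rep n := rfl
      rw [hr, applyG_cons, ha, ih, rep, rep, rep, ← List.replicate_add]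
      congr 1
      ring

lemma applyG_chunk (ha : h false = rep s)
    (hb : h true = rep γ₁ ++ blockWord p α ++ rep γ₂) (d : ℕ) :
    applyG h (chunk d) = rep γ₁ ++ trueChunks (baseL p α ++ [γ₂ + s * d]) := by
  rw [chunk, applyG_cons, hb, applyG_rep s h ha, ← blockWord_eq]
  rw [show rep (γ₂ + s * d) = rep γ₂ ++ rep (s * d) from by
    rw [rep, rep, rep, List.replicate_add]]
  simp [List.append_assoc]

lemma dropWhile_rep (n : ℕ) (l : Word) :
    List.dropWhile (fun x => !x) (rep n ++ l) = List.dropWhile (fun x => !x) l := by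
  induction n with
  | zero => simp [rep]
  | succ n ih =>
      have hr : rep (n + 1) = false :: rep n := rfl
      rw [hr, List.cons_append, List.dropWhile_cons]
      simpa using ih

lemma tc_head (L : List ℕ) (hL : L ≠ []) : ∃ Z, trueChunks L = true :: Z := by
  cases L with
  | nil => exact absurd rfl hL
  | cons d L => exact ⟨rep d ++ trueChunks L, by rw [trueChunks_cons]; rfl⟩

lemma dropWhile_tc (L : List ℕ) (hL : L ≠ []) :
    List.dropWhile (fun x => !x) (trueChunks L) = trueChunks L := by
  obtain ⟨Z, hZ⟩ := tc_head L hL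
  rw [hZ, List.dropWhile_cons]
  simp

lemma applyG_tc_decomp (ha : h false = rep s)
    (hb : h true = rep γ₁ ++ blockWord p α ++ rep γ₂) (M : List ℕ) (hM : M ≠ []) :
    ∃ Q : Word, applyG h (trueChunks M) = rep γ₁ ++ (true :: Q) := by
  cases M with
  | nil => exact absurd rfl hM
  | cons m M' =>
      obtain ⟨Zb, hZb⟩ := tc_head (baseL p α ++ [γ₂ + s * m]) (by simp)
      rw [trueChunks_cons, applyG_append, applyG_chunk s p γ₁ γ₂ α h ha hb, hZb]
      exact ⟨Zb ++ applyG h (trueChunks M'), by simp [List.append_assoc]⟩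

lemma expand_main (ha : h false = rep s)
    (hb : h true = rep γ₁ ++ blockWord p α ++ rep γ₂) :
    ∀ M : List ℕ, M ≠ [] →
    List.dropWhile (fun x => !x) (applyG h (trueChunks M)) ++ rep γ₁
      = trueChunks (M.flatMap (E s p γ₁ γ₂ α)) := by
  intro M
  induction M with
  | nil => intro hM; exact absurd rfl hM
  | cons d M ih =>
      intro _
      obtain ⟨Zb, hZb⟩ := tc_head (baseL p α ++ [γ₂ + s * d]) (by simp)
      rw [trueChunks_cons, applyG_append, applyG_chunk s p γ₁ γ₂ α h ha hb]
      by_cases hM : M = []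
      · subst hM
        rw [trueChunks_nil, applyG]
        simp only [List.flatMap_nil, List.append_nil, List.flatMap_cons]
        rw [dropWhile_rep, hZb, List.dropWhile_cons]
        rw [if_neg (by simp), ← hZb, tc_absorb, E]
      · have hdW := ih hM
        obtain ⟨Q, hQ⟩ := applyG_tc_decomp s p γ₁ γ₂ α h ha hb M hM
        have hdrop : List.dropWhile (fun x => !x) (applyG h (trueChunks M)) = true :: Q := by
          rw [hQ, dropWhile_rep, List.dropWhile_cons]
          simp
        have h1 : List.dropWhile (fun x => !x)
            (rep γ₁ ++ trueChunks (baseL p α ++ [γ₂ + s * d]) ++ applyG h (trueChunks M))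
            = trueChunks (baseL p α ++ [γ₂ + s * d]) ++ applyG h (trueChunks M) := by
          rw [List.append_assoc, dropWhile_rep, hZb, List.cons_append, List.dropWhile_cons]
          simp
        rw [h1]
        calc trueChunks (baseL p α ++ [γ₂ + s * d]) ++ applyG h (trueChunks M) ++ rep γ₁
            = (trueChunks (baseL p α ++ [γ₂ + s * d]) ++ rep γ₁)
              ++ ((true :: Q) ++ rep γ₁) := by
              rw [hQ]; simp [List.append_assoc]
          _ = trueChunks (E s p γ₁ γ₂ α d) ++ trueChunks (M.flatMap (E s p γ₁ γ₂ α)) := by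
              rw [tc_absorb, ← hdrop, hdW, E]
          _ = trueChunks ((d :: M).flatMap (E s p γ₁ γ₂ α)) := by
              rw [List.flatMap_cons, trueChunks_append]

lemma length_flatMap_E (hp : 2 ≤ p) (M : List ℕ) :
    (M.flatMap (E s p γ₁ γ₂ α)).length = p * M.length := by
  induction M with
  | nil => simp
  | cons d M ih =>
      rw [List.flatMap_cons, List.length_append, ih, length_E s p γ₁ γ₂ α hp]
      simp [Nat.mul_succ]
      ring

lemma good_flatMap (hp : 2 ≤ p) :
    ∀ (M : List ℕ) (j : ℕ), j < (M.flatMap (E s p γ₁ γ₂ α)).length →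
      j % p < p - 1 → (M.flatMap (E s p γ₁ γ₂ α))[j]? = some (α (j % p + 1)) := by
  intro M
  induction M with
  | nil => intro j hj; simp at hj
  | cons d M ih =>
      intro j hj hmod
      rw [List.flatMap_cons]
      by_cases hjp : j < p
      · rw [List.getElem?_append_left (by rw [length_E s p γ₁ γ₂ α hp]; exact hjp)]
        have hjm : j % p = j := Nat.mod_eq_of_lt hjp
        rw [hjm] at hmod ⊢
        rw [E, List.getElem?_append_left (by simp [baseL]; omega)]
        rw [baseL, List.getElem?_eq_getElem (by simp; omega)]
        simp
      · push_neg at hjp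
        rw [List.getElem?_append_right (by rw [length_E s p γ₁ γ₂ α hp]; exact hjp),
          length_E s p γ₁ γ₂ α hp]
        have hmod2 : j % p = (j - p) % p := Nat.mod_eq_sub_mod hjp
        rw [hmod2] at hmod ⊢
        apply ih
        · rw [List.flatMap_cons, List.length_append, length_E s p γ₁ γ₂ α hp] at hj
          omega
        · exact hmod

lemma blockWord_head : ∃ B, blockWord p α = true :: B := by
  obtain ⟨Z, hZ⟩ := tc_head (baseL p α ++ [0]) (by simp)
  refine ⟨Z, ?_⟩
  have h1 : blockWord p α ++ rep 0 = true :: Z := by rw [blockWord_eq, hZ]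
  simpa [rep] using h1

lemma inv (hp : 2 ≤ p) (ha : h false = rep s)
    (hb : h true = rep γ₁ ++ blockWord p α ++ rep γ₂) :
    ∀ n : ℕ, ∃ (M : List ℕ) (t : ℕ),
      M.length = p ^ (n + 1) ∧
      (∀ j : ℕ, j < M.length → j % p < p - 1 → M[j]? = some (α (j % p + 1))) ∧
      trueChunks M = (((applyG h)^[n + 1] [true]).dropWhile fun x => !x) ++ rep t := by
  intro n
  induction n with
  | zero =>
      refine ⟨baseL p α ++ [γ₂], 0, ?_, ?_, ?_⟩
      · simp [baseL]; omega
      · intro j hj hmod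
        have hjlen : (baseL p α ++ [γ₂]).length = p := by simp [baseL]; omega
        have hjp : j < p := by rwa [hjlen] at hj
        have hjm : j % p = j := Nat.mod_eq_of_lt hjp
        rw [hjm] at hmod ⊢
        rw [List.getElem?_append_left (by simp [baseL]; omega), baseL,
          List.getElem?_eq_getElem (by simp; omega)]
        simp
      · rw [Function.iterate_one]
        have h1 : applyG h [true] = h true := by simp [applyG]
        rw [h1, hb, List.append_assoc, dropWhile_rep, blockWord_eq]
        obtain ⟨Z, hZ⟩ := tc_head (baseL p α ++ [γ₂]) (by simp)
        rw [hZ, List.dropWhile_cons, if_neg (by simp), ← hZ, rep]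
        simp
  | succ n ih =>
      obtain ⟨M, t, hlen, hgood, htc⟩ := ih
      have hppos : 0 < p ^ (n + 1) := pow_pos (by omega) _
      have hMne : M ≠ [] := by
        intro hcon; rw [hcon] at hlen; simp at hlen; omega
      set l := (applyG h)^[n + 1] [true] with hl
      set u := l.dropWhile (fun x => !x) with hu
      have htw : l.takeWhile (fun x => !x) = rep ((l.takeWhile (fun x => !x)).length) := by
        rw [rep, List.eq_replicate_iff]
        refine ⟨rfl, fun b hb' => ?_⟩
        have := List.mem_takeWhile_imp hb'
        simpa using this
      have hlu : l = rep ((l.takeWhile (fun x => !x)).length) ++ u := by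
        rw [← htw, hu, List.takeWhile_append_dropWhile]
      obtain ⟨Zm, hZm⟩ := tc_head M hMne
      obtain ⟨u', hu'⟩ : ∃ u', u = true :: u' := by
        cases hcase : u with
        | nil =>
            exfalso
            have h2 : true :: Zm = rep t := by
              rw [← hZm, htc, hcase, List.nil_append]
            have hmem : (true : Bool) ∈ rep t := by
              rw [← h2]; exact List.mem_cons_self
            have h3 := List.eq_of_mem_replicate (by rwa [rep] at hmem)
            exact Bool.noConfusion h3
        | cons b u' =>
            refine ⟨u', ?_⟩
            have h2 : true :: Zm = b :: (u' ++ rep t) := by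
              rw [← hZm, htc, hcase, List.cons_append]
            injection h2 with h3 _
            rw [← h3]
      have hiter : (applyG h)^[n + 1 + 1] [true] = applyG h l := by
        rw [Function.iterate_succ_apply']
      have hdnext : (((applyG h)^[n + 1 + 1] [true]).dropWhile fun x => !x)
          = (applyG h u).dropWhile (fun x => !x) := by
        rw [hiter]
        conv_lhs => rw [hlu]
        rw [applyG_append, applyG_rep s h ha, dropWhile_rep]
      obtain ⟨B, hB⟩ := blockWord_head p α
      have happu : applyG h u = rep γ₁ ++ (true :: (B ++ (rep γ₂ ++ applyG h u'))) := by
        rw [hu', applyG_cons, hb, hB]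
        simp [List.append_assoc]
      have hdu : (applyG h u).dropWhile (fun x => !x)
          = true :: (B ++ (rep γ₂ ++ applyG h u')) := by
        rw [happu, dropWhile_rep, List.dropWhile_cons, if_neg (by simp)]
      have hexp := expand_main s p γ₁ γ₂ α h ha hb M hMne
      have htcM : applyG h (trueChunks M) = applyG h u ++ rep (s * t) := by
        rw [htc, applyG_append, applyG_rep s h ha]
      have hdM : (applyG h (trueChunks M)).dropWhile (fun x => !x)
          = (applyG h u).dropWhile (fun x => !x) ++ rep (s * t) := by
        rw [htcM, List.dropWhile_append, hdu]
        simp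
      refine ⟨M.flatMap (E s p γ₁ γ₂ α), s * t + γ₁, ?_, ?_, ?_⟩
      · rw [length_flatMap_E s p γ₁ γ₂ α hp, hlen, pow_succ]; ring
      · intro j hj hmod; exact good_flatMap s p γ₁ γ₂ α hp M j hj hmod
      · rw [← hexp, hdM, hdnext, rep, rep, rep, List.replicate_add, ← List.append_assoc]

end

end Stmt6Aux

theorem stmt6 (s : ℕ) (hs : 1 ≤ s) (p : ℕ) (hp : 2 ≤ p) (γ₁ γ₂ : ℕ) (α : ℕ → ℕ)
    (h : Bool → Word)
    (ha : h false = rep s)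
    (hb : h true = rep γ₁ ++ blockWord p α ++ rep γ₂)
    (w : ℕ → Bool) (hw : IsOmega h w) :
    ∀ i n : ℕ, 1 ≤ i → i ≤ p - 1 → Aw w (i + p * n) = α i := by
  intro i n' hi1 hi2
  set m := i + p * n' with hm
  obtain ⟨M, t, hlen, hgood, htc⟩ := Stmt6Aux.inv s p γ₁ γ₂ α h hp ha hb m
  have hmM : m < M.length := by
    rw [hlen]
    calc m < p ^ m := Nat.lt_pow_self (by omega)
      _ ≤ p ^ (m + 1) := Nat.pow_le_pow_right (by omega) (by omega)
  set u := (((applyG h)^[m + 1] [true]).dropWhile fun x => !x) with hu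
  have hagree : ∀ j, j < u.length → some (w j) = (Stmt6Aux.trueChunks M)[j]? := by
    intro j hj
    rw [htc, List.getElem?_append_left hj, List.getElem?_eq_getElem hj]
    have h5 := hw (m + 1) j hj
    rw [← h5]
    rfl
  have key : ∀ k, k < M.length →
      Nat.nth (fun n => w n = true) k = Stmt6Aux.S M k := by
    intro k hk
    have hSlt := Stmt6Aux.S_lt M k hk
    have hget := Stmt6Aux.getElem_S M k hk hSlt
    have hSu : Stmt6Aux.S M k < u.length := by
      by_contra hcon
      push_neg at hcon
      have h2 : (Stmt6Aux.trueChunks M)[Stmt6Aux.S M k] = false := by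
        rw [List.getElem_of_eq htc hSlt, List.getElem_append_right hcon]
        simp [rep]
      rw [hget] at h2
      exact Bool.noConfusion h2
    have hwS : w (Stmt6Aux.S M k) = true := by
      have h6 := hagree (Stmt6Aux.S M k) hSu
      rw [List.getElem?_eq_getElem hSlt, hget] at h6
      exact Option.some.inj h6
    have hcount : Nat.count (fun n => w n = true) (Stmt6Aux.S M k) = k := by
      have hrange : (List.range (Stmt6Aux.S M k)).map w
          = (Stmt6Aux.trueChunks M).take (Stmt6Aux.S M k) := by
        apply List.ext_getElem
        · simp; omega
        · intro j h1 h2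
          rw [List.getElem_map, List.getElem_range, List.getElem_take]
          have hjS : j < Stmt6Aux.S M k := by simpa using h1
          have h7 := hagree j (by omega)
          rw [List.getElem?_eq_getElem (by omega)] at h7
          exact Option.some.inj h7
      have h8 : Nat.count (fun n => w n = true) (Stmt6Aux.S M k)
          = ((Stmt6Aux.trueChunks M).take (Stmt6Aux.S M k)).count true := by
        rw [← hrange, List.count_eq_countP, List.countP_map]
        have hfun : ((fun x => x == true) ∘ w) = fun x => decide (w x = true) := by
          funext j; cases h9 : w j <;> simp [h9]
        rw [hfun]
        rfl
      rw [h8, Stmt6Aux.take_S, Stmt6Aux.count_trueChunks, List.length_take]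
      omega
    have h10 := Nat.nth_count (p := fun n => w n = true) hwS
    rw [hcount] at h10
    exact h10
  have hm2 : m - 1 < M.length := by omega
  have hS : Stmt6Aux.S M m = Stmt6Aux.S M (m - 1) + (M[m - 1] + 1) := by
    have h11 := Stmt6Aux.S_succ M (m - 1) hm2
    rw [show m - 1 + 1 = m from by omega] at h11
    exact h11
  have hMval : M[m - 1] = α i := by
    have hmod : (m - 1) % p = i - 1 := by
      rw [hm, show i + p * n' - 1 = (i - 1) + p * n' from by omega,
        Nat.add_mul_mod_self_left, Nat.mod_eq_of_lt (by omega)]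
    have hg := hgood (m - 1) hm2 (by rw [hmod]; omega)
    rw [List.getElem?_eq_getElem hm2] at hg
    have h12 : M[m - 1] = α ((m - 1) % p + 1) := Option.some.inj hg
    rw [h12, hmod, show i - 1 + 1 = i from by omega]
  rw [Aw, key m hmM, key (m - 1) (by omega), hS, hMval]
  omega
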